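/- arXiv:2112.11287 — 2 statements merged into one kernel-verified Lean document; each statement's English description precedes it below -/
import Mathlib

section
/- Let (u, θ) be a solution of Model D with input f ∈ C⁰(ℝ₊; L²(0,1)) ∩ C⁰((0,∞)×(0,1)). Then for every t > 0 the functional E satisfies the identity d/dt E(u[t], u_t[t], θ[t]) = −μ∫₀¹ u_t²(t,x) dx + ∫₀¹ u_t(t,x)f(t,x) dx − σ∫₀¹ u_xt²(t,x) dx − a·c²·u_t²(t,1) − (kb/λ)∫₀¹ θ_x²(t,x) dx. -/
open MeasureTheory Set intervalIntegral Filter Topology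
open scoped Interval

/-- differentiation under the integral sign on [0,1] with parameter in Ioi 0 -/
lemma param_deriv (F G : ℝ → ℝ → ℝ) (t : ℝ) (ht : 0 < t)
    (hFc : ContinuousOn (fun p : ℝ × ℝ => F p.1 p.2) (Ici 0 ×ˢ Icc 0 1))
    (hGc : ContinuousOn (fun p : ℝ × ℝ => G p.1 p.2) (Ici 0 ×ˢ Icc 0 1))
    (hd : ∀ s ∈ Ioi (0:ℝ), ∀ x ∈ Icc (0:ℝ) 1, HasDerivAt (fun r => F r x) (G s x) s) :
    HasDerivAt (fun s => ∫ x in (0:ℝ)..1, F s x) (∫ x in (0:ℝ)..1, G t x) t := by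
  have hι : Ι (0:ℝ) 1 = Ioc 0 1 := uIoc_of_le zero_le_one
  have hslicemeas : ∀ H : ℝ → ℝ → ℝ,
      ContinuousOn (fun p : ℝ × ℝ => H p.1 p.2) (Ici 0 ×ˢ Icc 0 1) → ∀ s ∈ Ici (0:ℝ),
      ContinuousOn (fun x => H s x) (Icc 0 1) := by
    intro H hH s hs
    have : ContinuousOn ((fun p : ℝ × ℝ => H p.1 p.2) ∘ (fun x => (s, x))) (Icc 0 1) :=
      hH.comp (Continuous.continuousOn (by continuity)) (fun x hx => ⟨hs, hx⟩)
    exact this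
  have hmeas : ∀ H : ℝ → ℝ → ℝ,
      ContinuousOn (fun p : ℝ × ℝ => H p.1 p.2) (Ici 0 ×ˢ Icc 0 1) → ∀ s ∈ Ici (0:ℝ),
      AEStronglyMeasurable (fun x => H s x) (volume.restrict (Ι (0:ℝ) 1)) := by
    intro H hH s hs
    rw [hι]
    exact ((hslicemeas H hH s hs).mono Ioc_subset_Icc_self).aestronglyMeasurable measurableSet_Ioc
  -- compact bound for G
  have hKcompact : IsCompact ((Icc (t/2) (t + t/2)) ×ˢ (Icc (0:ℝ) 1)) :=
    isCompact_Icc.prod isCompact_Icc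
  have hKsub : (Icc (t/2) (t + t/2)) ×ˢ (Icc (0:ℝ) 1) ⊆ Ici 0 ×ˢ Icc 0 1 := by
    intro p hp
    exact ⟨le_trans (by linarith : (0:ℝ) ≤ t/2) hp.1.1, hp.2⟩
  obtain ⟨C, hC⟩ := hKcompact.exists_bound_of_continuousOn (hGc.mono hKsub)
  have εpos : (0:ℝ) < t/2 := by linarith
  refine (intervalIntegral.hasDerivAt_integral_of_dominated_loc_of_deriv_le (Metric.ball_mem_nhds t εpos)
    (F := F) (F' := G) (bound := fun _ => C) ?_ ?_ ?_ ?_ ?_ ?_).2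
  · filter_upwards [eventually_ge_nhds (by linarith : (0:ℝ) < t)] with s hs
    exact hmeas F hFc s hs
  · exact ((hslicemeas F hFc t ht.le).mono (by rw [uIcc_of_le zero_le_one])).intervalIntegrable
  · exact hmeas G hGc t ht.le
  · filter_upwards with x
    intro hx s hs
    rw [Real.ball_eq_Ioo] at hs
    exact hC (s, x) ⟨⟨by simp only; linarith [hs.1], by simp only; linarith [hs.2]⟩, Ioc_subset_Icc_self (hι ▸ hx)⟩
  · exact intervalIntegrable_const
  · filter_upwards with x
    intro hx s hs
    rw [Real.ball_eq_Ioo] at hs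
    exact hd s (by simp only [mem_Ioi]; linarith [hs.1]) x (Ioc_subset_Icc_self (hι ▸ hx))


lemma ae_deriv_eq (Θ DΘ : ℝ → Lp ℝ 2 (volume.restrict (Ioo (0:ℝ) 1)))
    (θ θt : ℝ → ℝ → ℝ) (t : ℝ) (ht : 0 < t)
    (hΘd : HasDerivAt Θ (DΘ t) t)
    (hae : ∀ s ∈ Ici (0:ℝ), (fun x => θ s x) =ᵐ[volume.restrict (Ioo (0:ℝ) 1)] (Θ s : ℝ → ℝ))
    (hpt : ∀ x ∈ Ioo (0:ℝ) 1, HasDerivAt (fun s => θ s x) (θt t x) t) :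
    (fun x => θt t x) =ᵐ[volume.restrict (Ioo (0:ℝ) 1)] (DΘ t : ℝ → ℝ) := by
  set s : ℕ → ℝ := fun n => t + 1/(n+1) with hs
  have hspos : ∀ n, 0 < s n := fun n => by positivity
  have hsne : ∀ n, s n ≠ t := fun n => by
    have : (0:ℝ) < 1/(n+1) := by positivity
    simp only [hs]; intro h; nlinarith
  have hstend : Tendsto s atTop (𝓝[≠] t) := by
    apply tendsto_nhdsWithin_of_tendsto_nhds_of_eventually_within
    · have : Tendsto (fun n : ℕ => 1/((n:ℝ)+1)) atTop (𝓝 0) := tendsto_one_div_add_atTop_nhds_zero_nat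
      exact (by simpa [one_div] using this.const_add t :
        Tendsto (fun n : ℕ => t + 1/((n:ℝ)+1)) atTop (𝓝 t))
    · exact Eventually.of_forall fun n => hsne n
  set g : ℕ → Lp ℝ 2 (volume.restrict (Ioo (0:ℝ) 1)) :=
    fun n => (s n - t)⁻¹ • (Θ (s n) - Θ t) with hg
  have hgslope : ∀ n, g n = slope Θ t (s n) := by
    intro n; rw [slope_def_module]
  have hgtend : Tendsto g atTop (𝓝 (DΘ t)) := by
    have h0 := (hasDerivAt_iff_tendsto_slope.1 hΘd).comp hstend
    have heq : (slope Θ t ∘ s) = g := funext fun n => (hgslope n).symm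
    rwa [heq] at h0
  have hmeasconv := tendstoInMeasure_of_tendsto_Lp hgtend
  obtain ⟨ns, hnsmono, hnsae⟩ := hmeasconv.exists_seq_tendsto_ae
  have hcoe : ∀ n, (g n : ℝ → ℝ) =ᵐ[volume.restrict (Ioo (0:ℝ) 1)]
      fun x => (s n - t)⁻¹ * (θ (s n) x - θ t x) := by
    intro n
    filter_upwards [Lp.coeFn_smul ((s n - t)⁻¹) (Θ (s n) - Θ t),
      Lp.coeFn_sub (Θ (s n)) (Θ t), hae (s n) (hspos n).le, hae t ht.le] with x h1 h2 h3 h4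
    simp only [hg, h1, Pi.smul_apply, h2, Pi.sub_apply, smul_eq_mul, ← h3, ← h4]
  have hmem : ∀ᵐ x ∂(volume.restrict (Ioo (0:ℝ) 1)), x ∈ Ioo (0:ℝ) 1 :=
    ae_restrict_mem measurableSet_Ioo
  filter_upwards [hnsae, hmem, ae_all_iff.2 hcoe] with x hx1 hx2 hx3
  have hpt' : Tendsto (fun n => (s n - t)⁻¹ * (θ (s n) x - θ t x)) atTop (𝓝 (θt t x)) := by
    have h0 := (hasDerivAt_iff_tendsto_slope.1 (hpt x hx2)).comp hstend
    have heq : (slope (fun r => θ r x) t ∘ s) =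
        fun n => (s n - t)⁻¹ * (θ (s n) x - θ t x) := by
      funext n
      show slope (fun r => θ r x) t (s n) = _
      rw [slope_def_module]; simp [smul_eq_mul]
    rwa [heq] at h0
  have h1 : Tendsto (fun k => (g (ns k) : ℝ → ℝ) x) atTop (𝓝 (θt t x)) := by
    have : Tendsto (fun k => (s (ns k) - t)⁻¹ * (θ (s (ns k)) x - θ t x)) atTop (𝓝 (θt t x)) :=
      hpt'.comp hnsmono.tendsto_atTop
    simpa [fun k => hx3 (ns k)] using this
  exact tendsto_nhds_unique h1 hx1


lemma sliceCont {H : ℝ → ℝ → ℝ}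
    (hH : ContinuousOn (fun p : ℝ × ℝ => H p.1 p.2) (Ici 0 ×ˢ Icc 0 1)) {s : ℝ} (hs : 0 ≤ s) :
    ContinuousOn (fun x => H s x) (Icc 0 1) :=
  hH.comp (f := fun x : ℝ => ((s, x) : ℝ × ℝ)) (Continuous.continuousOn (Continuous.prodMk_right s))
    (fun x hx => ⟨hs, hx⟩)

lemma contII {h : ℝ → ℝ} (hh : ContinuousOn h (Icc 0 1)) :
    IntervalIntegrable h volume 0 1 :=
  (by rwa [uIcc_of_le zero_le_one] : ContinuousOn h (uIcc 0 1)).intervalIntegrable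

lemma ibp (p q p' q' : ℝ → ℝ)
    (hp : ContinuousOn p (Icc 0 1)) (hq : ContinuousOn q (Icc 0 1))
    (hpd : ∀ x ∈ Ioo (0:ℝ) 1, HasDerivAt p (p' x) x)
    (hqd : ∀ x ∈ Ioo (0:ℝ) 1, HasDerivAt q (q' x) x)
    (hint : IntervalIntegrable (fun x => p' x * q x + p x * q' x) volume 0 1) :
    ∫ x in (0:ℝ)..1, (p' x * q x + p x * q' x) = p 1 * q 1 - p 0 * q 0 :=
  integral_eq_sub_of_hasDeriv_right_of_le zero_le_one (hp.mul hq)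
    (fun x hx => (((hpd x hx).mul (hqd x hx))).hasDerivWithinAt) hint

/-- a.e. strongly measurable + square interval-integrable implies interval-integrable,
after multiplying by a function continuous on `Icc 0 1`. -/
lemma mulII (φ h : ℝ → ℝ) (hφ : ContinuousOn φ (Icc 0 1))
    (hm : AEStronglyMeasurable h (volume.restrict (Ι (0:ℝ) 1)))
    (hint : IntervalIntegrable (fun x => (h x)^2) volume 0 1) :
    IntervalIntegrable (fun x => φ x * h x) volume 0 1 := by
  obtain ⟨C, hC⟩ := (isCompact_Icc.exists_bound_of_continuousOn hφ)
  have hC0 : 0 ≤ C := le_trans (norm_nonneg _) (hC 0 ⟨le_refl 0, zero_le_one⟩)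
  have hι : Ι (0:ℝ) 1 = Ioc 0 1 := uIoc_of_le zero_le_one
  have hg : IntervalIntegrable (fun x => C * (1 + (h x)^2)) volume 0 1 :=
    (intervalIntegrable_const.add hint).const_mul C
  refine hg.mono_fun ((hφ.mono (by rw [hι]; exact Ioc_subset_Icc_self)).aestronglyMeasurable
    (by rw [hι]; exact measurableSet_Ioc) |>.mul hm) ?_
  filter_upwards [ae_restrict_mem (by rw [hι]; exact measurableSet_Ioc)] with x hx
  have hx' : x ∈ Icc (0:ℝ) 1 := Ioc_subset_Icc_self (hι ▸ hx)
  have h1 : |φ x| ≤ C := hC x hx'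
  have h2 : |h x| ≤ 1 + (h x)^2 := by nlinarith [abs_nonneg (h x), sq_abs (h x)]
  have h3 : |φ x * h x| ≤ C * (1 + (h x)^2) := by
    rw [abs_mul]
    exact mul_le_mul h1 h2 (abs_nonneg _) hC0
  have h4 : ‖C * (1 + (h x)^2)‖ = C * (1 + (h x)^2) :=
    Real.norm_of_nonneg (by positivity)
  rw [Real.norm_eq_abs, h4]
  exact h3


lemma theta_deriv (θ θt : ℝ → ℝ → ℝ) (t : ℝ) (ht : 0 < t)
    (Θ DΘ : ℝ → Lp ℝ 2 (volume.restrict (Ioo (0:ℝ) 1)))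
    (hΘd : ∀ s ∈ Ioi (0:ℝ), HasDerivAt Θ (DΘ s) s)
    (hae : ∀ s ∈ Ici (0:ℝ), (fun x => θ s x) =ᵐ[volume.restrict (Ioo (0:ℝ) 1)] (Θ s : ℝ → ℝ))
    (haeD : (fun x => θt t x) =ᵐ[volume.restrict (Ioo (0:ℝ) 1)] (DΘ t : ℝ → ℝ)) :
    HasDerivAt (fun s => ∫ x in (0:ℝ)..1, (θ s x)^2)
      (2 * ∫ x in (0:ℝ)..1, θ t x * θt t x) t := by
  have key : ∀ s ∈ Ioi (0:ℝ), ∫ x in (0:ℝ)..1, (θ s x)^2 = @inner ℝ _ _ (Θ s) (Θ s) := by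
    intro s hs
    rw [MeasureTheory.L2.inner_def]
    rw [intervalIntegral.integral_of_le zero_le_one, integral_Ioc_eq_integral_Ioo]
    apply MeasureTheory.integral_congr_ae
    filter_upwards [hae s (mem_Ici.2 (le_of_lt hs))] with x hx
    simp [hx, RCLike.inner_apply, conj_trivial, pow_two]
  have hinner : HasDerivAt (fun s => @inner ℝ _ _ (Θ s) (Θ s))
      (@inner ℝ _ _ (Θ t) (DΘ t) + @inner ℝ _ _ (DΘ t) (Θ t)) t :=
    HasDerivAt.inner ℝ (hΘd t ht) (hΘd t ht)
  have hval : @inner ℝ _ _ (Θ t) (DΘ t) + @inner ℝ _ _ (DΘ t) (Θ t)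
      = 2 * ∫ x in (0:ℝ)..1, θ t x * θt t x := by
    have h1 : @inner ℝ _ _ (Θ t) (DΘ t) = ∫ x in (0:ℝ)..1, θ t x * θt t x := by
      rw [MeasureTheory.L2.inner_def]
      rw [intervalIntegral.integral_of_le zero_le_one, integral_Ioc_eq_integral_Ioo]
      symm
      apply MeasureTheory.integral_congr_ae
      filter_upwards [hae t ht.le, haeD] with x hx1 hx2
      simp [hx1, hx2, RCLike.inner_apply, conj_trivial, mul_comm]
    have h2 : @inner ℝ _ _ (DΘ t) (Θ t) = @inner ℝ _ _ (Θ t) (DΘ t) := real_inner_comm _ _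
    rw [h1, h2, h1]; ring
  rw [← hval]
  apply hinner.congr_of_eventuallyEq
  filter_upwards [Ioi_mem_nhds ht] with s hs
  exact key s hs

lemma intcongr {f g : ℝ → ℝ} (h : ∀ x, f x = g x) :
    ∫ x in (0:ℝ)..1, f x = ∫ x in (0:ℝ)..1, g x :=
  intervalIntegral.integral_congr (fun x _ => h x)

lemma hone : ∀ᵐ x ∂(volume : Measure ℝ), x ≠ (1:ℝ) := by
  refine ae_iff.mpr ?_
  have h1 : {x : ℝ | ¬ x ≠ 1} = {1} := by ext y; simp [not_not]
  rw [h1]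
  exact measure_singleton 1

lemma hμeq : (volume : Measure ℝ).restrict (Ι (0:ℝ) 1) = volume.restrict (Ioo (0:ℝ) 1) := by
  rw [uIoc_of_le zero_le_one]
  exact Measure.restrict_congr_set Ioo_ae_eq_Ioc.symm
open MeasureTheory Set

theorem stmt14 (a c μ σ b k lam : ℝ) (ha : 0 < a) (hc : 0 < c) (hμ : 0 ≤ μ)
    (hσ : 0 < σ) (hb : 0 < b) (hk : 0 < k) (hlam : 0 < lam)
    (u ut ux utt uxx uxt uxxt θ θt θx θxx f : ℝ → ℝ → ℝ)
    (hu_c : ContinuousOn (fun p : ℝ × ℝ => u p.1 p.2) (Set.Ici 0 ×ˢ Set.Icc 0 1))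
    (hut_c : ContinuousOn (fun p : ℝ × ℝ => ut p.1 p.2) (Set.Ici 0 ×ˢ Set.Icc 0 1))
    (hux_c : ContinuousOn (fun p : ℝ × ℝ => ux p.1 p.2) (Set.Ici 0 ×ˢ Set.Icc 0 1))
    (hutt_c : ContinuousOn (fun p : ℝ × ℝ => utt p.1 p.2) (Set.Ici 0 ×ˢ Set.Icc 0 1))
    (huxx_c : ContinuousOn (fun p : ℝ × ℝ => uxx p.1 p.2) (Set.Ici 0 ×ˢ Set.Icc 0 1))
    (huxt_c : ContinuousOn (fun p : ℝ × ℝ => uxt p.1 p.2) (Set.Ici 0 ×ˢ Set.Icc 0 1))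
    (hut_d : ∀ t ∈ Set.Ici (0:ℝ), ∀ x ∈ Set.Icc (0:ℝ) 1,
      HasDerivWithinAt (fun s => u s x) (ut t x) (Set.Ici 0) t)
    (hux_d : ∀ t ∈ Set.Ici (0:ℝ), ∀ x ∈ Set.Icc (0:ℝ) 1,
      HasDerivWithinAt (fun y => u t y) (ux t x) (Set.Icc 0 1) x)
    (hutt_d : ∀ t ∈ Set.Ici (0:ℝ), ∀ x ∈ Set.Icc (0:ℝ) 1,
      HasDerivWithinAt (fun s => ut s x) (utt t x) (Set.Ici 0) t)
    (huxx_d : ∀ t ∈ Set.Ici (0:ℝ), ∀ x ∈ Set.Icc (0:ℝ) 1,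
      HasDerivWithinAt (fun y => ux t y) (uxx t x) (Set.Icc 0 1) x)
    (huxt_d : ∀ t ∈ Set.Ici (0:ℝ), ∀ x ∈ Set.Icc (0:ℝ) 1,
      HasDerivWithinAt (fun y => ut t y) (uxt t x) (Set.Icc 0 1) x ∧
      HasDerivWithinAt (fun s => ux s x) (uxt t x) (Set.Ici 0) t)
    (huxxt_d : ∀ t ∈ Set.Ioi (0:ℝ), ∀ x ∈ Set.Ioo (0:ℝ) 1,
      HasDerivAt (fun s => uxx s x) (uxxt t x) t)
    (hutH2 : ∀ t ∈ Set.Ioi (0:ℝ), ∀ x ∈ Set.Icc (0:ℝ) 1,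
      HasDerivWithinAt (fun y => uxt t y) (uxxt t x) (Set.Icc 0 1) x)
    (huxxt_int : ∀ t ∈ Set.Ioi (0:ℝ), IntervalIntegrable (fun x => (uxxt t x)^2) MeasureTheory.volume 0 1)
    (hθ_c : ContinuousOn (fun p : ℝ × ℝ => θ p.1 p.2) (Set.Ici 0 ×ˢ Set.Icc 0 1))
    (hθt_d : ∀ t ∈ Set.Ioi (0:ℝ), ∀ x ∈ Set.Ioo (0:ℝ) 1,
      HasDerivAt (fun s => θ s x) (θt t x) t)
    (hθ_L2 : ∃ Θ DΘ : ℝ → MeasureTheory.Lp ℝ 2 (MeasureTheory.volume.restrict (Set.Ioo (0:ℝ) 1)),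
      (∀ t ∈ Set.Ioi (0:ℝ), HasDerivAt Θ (DΘ t) t) ∧ ContinuousOn DΘ (Set.Ioi 0) ∧
      ∀ t ∈ Set.Ici (0:ℝ),
        (fun x => θ t x) =ᵐ[MeasureTheory.volume.restrict (Set.Ioo (0:ℝ) 1)] (Θ t : ℝ → ℝ))
    (hθx_d : ∀ t ∈ Set.Ioi (0:ℝ), ∀ x ∈ Set.Icc (0:ℝ) 1,
      HasDerivWithinAt (fun y => θ t y) (θx t x) (Set.Icc 0 1) x)
    (hθxx_d : ∀ t ∈ Set.Ioi (0:ℝ), ∀ x ∈ Set.Icc (0:ℝ) 1,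
      HasDerivWithinAt (fun y => θx t y) (θxx t x) (Set.Icc 0 1) x)
    (hθx_int : ∀ t ∈ Set.Ioi (0:ℝ), IntervalIntegrable (fun x => (θx t x)^2) MeasureTheory.volume 0 1)
    (hθxx_int : ∀ t ∈ Set.Ioi (0:ℝ), IntervalIntegrable (fun x => (θxx t x)^2) MeasureTheory.volume 0 1)
    (hpde1 : ∀ t ∈ Set.Ioi (0:ℝ), ∀ x ∈ Set.Ioo (0:ℝ) 1,
      utt t x = c^2 * uxx t x + σ * uxxt t x - μ * ut t x - b * θx t x + f t x)
    (hpde2 : ∀ t ∈ Set.Ioi (0:ℝ), ∀ x ∈ Set.Ioo (0:ℝ) 1,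
      θt t x = k * θxx t x - lam * uxt t x)
    (hbc0 : ∀ t ∈ Set.Ioi (0:ℝ), u t 0 = 0)
    (hbc1 : ∀ t ∈ Set.Ioi (0:ℝ), ux t 1 = -a * ut t 1)
    (hbcθ : ∀ t ∈ Set.Ioi (0:ℝ), θ t 0 = 0 ∧ θ t 1 = 0)
    (hf_c : ContinuousOn (fun p : ℝ × ℝ => f p.1 p.2) (Set.Ioi 0 ×ˢ Set.Ioo 0 1))
    (hf_L2 : ∃ F : ℝ → MeasureTheory.Lp ℝ 2 (MeasureTheory.volume.restrict (Set.Ioo (0:ℝ) 1)),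
      ContinuousOn F (Set.Ici 0) ∧ ∀ t ∈ Set.Ici (0:ℝ),
        (fun x => f t x) =ᵐ[MeasureTheory.volume.restrict (Set.Ioo (0:ℝ) 1)] (F t : ℝ → ℝ))
    (hf_int : ∀ t ∈ Set.Ici (0:ℝ), IntervalIntegrable (fun x => (f t x)^2) MeasureTheory.volume 0 1) :
    ∀ t ∈ Set.Ioi (0:ℝ),
      HasDerivAt (fun s => (1/2) * (∫ x in (0:ℝ)..1, (ut s x)^2) + (c^2/2) * (∫ x in (0:ℝ)..1, (ux s x)^2) +
        (b/(2*lam)) * (∫ x in (0:ℝ)..1, (θ s x)^2) + (a*σ/2) * (ut s 1)^2)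
        (-μ * (∫ x in (0:ℝ)..1, (ut t x)^2) + (∫ x in (0:ℝ)..1, ut t x * f t x) -
          σ * (∫ x in (0:ℝ)..1, (uxt t x)^2) - a * c^2 * (ut t 1)^2 -
          (k*b/lam) * (∫ x in (0:ℝ)..1, (θx t x)^2)) t := by

  intro t ht
  have ht' : (0:ℝ) < t := ht
  obtain ⟨Θ, DΘ, hΘd, _, haeΘ⟩ := hθ_L2
  -- slice continuity at time t
  have cut : ContinuousOn (fun x => ut t x) (Icc 0 1) := sliceCont hut_c ht'.le
  have cux : ContinuousOn (fun x => ux t x) (Icc 0 1) := sliceCont hux_c ht'.le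
  have cuxx : ContinuousOn (fun x => uxx t x) (Icc 0 1) := sliceCont huxx_c ht'.le
  have cuxt : ContinuousOn (fun x => uxt t x) (Icc 0 1) := sliceCont huxt_c ht'.le
  have cθ : ContinuousOn (fun x => θ t x) (Icc 0 1) := sliceCont hθ_c ht'.le
  have cθx : ContinuousOn (fun x => θx t x) (Icc 0 1) :=
    fun x hx => (hθxx_d t ht x hx).continuousWithinAt
  -- boundary values
  have hmem1 : (1:ℝ) ∈ Icc (0:ℝ) 1 := ⟨zero_le_one, le_refl 1⟩
  have hmem0 : (0:ℝ) ∈ Icc (0:ℝ) 1 := ⟨le_refl 0, zero_le_one⟩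
  have ut0 : ut t 0 = 0 := by
    have hd : HasDerivAt (fun s => u s 0) (ut t 0) t :=
      (hut_d t ht'.le 0 hmem0).hasDerivAt (Ici_mem_nhds ht')
    have hc : HasDerivAt (fun s => u s 0) 0 t := by
      refine (hasDerivAt_const t (0:ℝ)).congr_of_eventuallyEq ?_
      filter_upwards [Ioi_mem_nhds ht'] with s hs
      exact hbc0 s hs
    exact hd.unique hc
  have uxt1 : uxt t 1 = -a * utt t 1 := by
    have hd1 : HasDerivAt (fun s => ux s 1) (uxt t 1) t :=
      ((huxt_d t ht'.le 1 hmem1).2).hasDerivAt (Ici_mem_nhds ht')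
    have hd2 : HasDerivAt (fun s => -a * ut s 1) (-a * utt t 1) t :=
      ((hutt_d t ht'.le 1 hmem1).hasDerivAt (Ici_mem_nhds ht')).const_mul (-a)
    have hd2' : HasDerivAt (fun s => ux s 1) (-a * utt t 1) t := by
      refine hd2.congr_of_eventuallyEq ?_
      filter_upwards [Ioi_mem_nhds ht'] with s hs
      exact hbc1 s hs
    exact hd1.unique hd2'

  -- boundary values of θ
  have θ0 : θ t 0 = 0 := (hbcθ t ht).1
  have θ1 : θ t 1 = 0 := (hbcθ t ht).2
  -- measurability of second derivatives
  have m_uxxt : AEStronglyMeasurable (fun x => uxxt t x) (volume.restrict (Ι (0:ℝ) 1)) := by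
    rw [hμeq]
    refine (measurable_deriv (fun y => uxt t y)).aestronglyMeasurable.congr ?_
    filter_upwards [ae_restrict_mem measurableSet_Ioo] with x hx
    exact ((hutH2 t ht x (Ioo_subset_Icc_self hx)).hasDerivAt
      (Icc_mem_nhds hx.1 hx.2)).deriv
  have m_θxx : AEStronglyMeasurable (fun x => θxx t x) (volume.restrict (Ι (0:ℝ) 1)) := by
    rw [hμeq]
    refine (measurable_deriv (fun y => θx t y)).aestronglyMeasurable.congr ?_
    filter_upwards [ae_restrict_mem measurableSet_Ioo] with x hx
    exact ((hθxx_d t ht x (Ioo_subset_Icc_self hx)).hasDerivAt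
      (Icc_mem_nhds hx.1 hx.2)).deriv
  have m_f : AEStronglyMeasurable (fun x => f t x) (volume.restrict (Ι (0:ℝ) 1)) := by
    rw [hμeq]
    have : ContinuousOn (fun x => f t x) (Ioo 0 1) :=
      hf_c.comp (f := fun x : ℝ => ((t, x) : ℝ × ℝ)) (Continuous.continuousOn
        (Continuous.prodMk_right t)) (fun x hx => ⟨ht, hx⟩)
    exact this.aestronglyMeasurable measurableSet_Ioo
  -- integrability
  have ii_ut_uxxt : IntervalIntegrable (fun x => ut t x * uxxt t x) volume 0 1 :=
    mulII _ _ cut m_uxxt (huxxt_int t ht)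
  have ii_θ_θxx : IntervalIntegrable (fun x => θ t x * θxx t x) volume 0 1 :=
    mulII _ _ cθ m_θxx (hθxx_int t ht)
  have ii_ut_f : IntervalIntegrable (fun x => ut t x * f t x) volume 0 1 :=
    mulII _ _ cut m_f (hf_int t ht'.le)
  have ii_A : IntervalIntegrable (fun x => (ut t x)^2) volume 0 1 := contII (cut.pow 2)
  have ii_B : IntervalIntegrable (fun x => ut t x * uxx t x) volume 0 1 := contII (cut.mul cuxx)
  have ii_D : IntervalIntegrable (fun x => ut t x * θx t x) volume 0 1 := contII (cut.mul cθx)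
  have ii_Q : IntervalIntegrable (fun x => (uxt t x)^2) volume 0 1 := contII (cuxt.pow 2)
  have ii_θuxt : IntervalIntegrable (fun x => θ t x * uxt t x) volume 0 1 := contII (cθ.mul cuxt)

  -- spatial derivatives as HasDerivAt on the interior
  have dut : ∀ x ∈ Ioo (0:ℝ) 1, HasDerivAt (fun y => ut t y) (uxt t x) x := fun x hx =>
    ((huxt_d t ht'.le x (Ioo_subset_Icc_self hx)).1).hasDerivAt (Icc_mem_nhds hx.1 hx.2)
  have dux : ∀ x ∈ Ioo (0:ℝ) 1, HasDerivAt (fun y => ux t y) (uxx t x) x := fun x hx =>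
    (huxx_d t ht'.le x (Ioo_subset_Icc_self hx)).hasDerivAt (Icc_mem_nhds hx.1 hx.2)
  have duxt : ∀ x ∈ Ioo (0:ℝ) 1, HasDerivAt (fun y => uxt t y) (uxxt t x) x := fun x hx =>
    (hutH2 t ht x (Ioo_subset_Icc_self hx)).hasDerivAt (Icc_mem_nhds hx.1 hx.2)
  have dθ : ∀ x ∈ Ioo (0:ℝ) 1, HasDerivAt (fun y => θ t y) (θx t x) x := fun x hx =>
    (hθx_d t ht x (Ioo_subset_Icc_self hx)).hasDerivAt (Icc_mem_nhds hx.1 hx.2)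
  have dθx : ∀ x ∈ Ioo (0:ℝ) 1, HasDerivAt (fun y => θx t y) (θxx t x) x := fun x hx =>
    (hθxx_d t ht x (Ioo_subset_Icc_self hx)).hasDerivAt (Icc_mem_nhds hx.1 hx.2)
  -- integration by parts identities
  have hI1 : ∫ x in (0:ℝ)..1, (uxt t x * ux t x + ut t x * uxx t x)
      = ut t 1 * ux t 1 - ut t 0 * ux t 0 :=
    ibp _ _ _ _ cut cux dut dux (contII ((cuxt.mul cux).add (cut.mul cuxx)))
  have hI2 : ∫ x in (0:ℝ)..1, (uxt t x * uxt t x + ut t x * uxxt t x)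
      = ut t 1 * uxt t 1 - ut t 0 * uxt t 0 :=
    ibp _ _ _ _ cut cuxt dut duxt ((contII (cuxt.mul cuxt)).add ii_ut_uxxt)
  have hI3 : ∫ x in (0:ℝ)..1, (θx t x * θx t x + θ t x * θxx t x)
      = θ t 1 * θx t 1 - θ t 0 * θx t 0 :=
    ibp _ _ _ _ cθ cθx dθ dθx ((contII (cθx.mul cθx)).add ii_θ_θxx)
  have hI4 : ∫ x in (0:ℝ)..1, (θx t x * ut t x + θ t x * uxt t x)
      = θ t 1 * ut t 1 - θ t 0 * ut t 0 :=
    ibp _ _ _ _ cθ cut dθ dut (contII ((cθx.mul cut).add (cθ.mul cuxt)))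

  -- PDE integral identities
  have hS1 : ∫ x in (0:ℝ)..1, ut t x * utt t x
      = c^2 * (∫ x in (0:ℝ)..1, ut t x * uxx t x) + σ * (∫ x in (0:ℝ)..1, ut t x * uxxt t x)
        - μ * (∫ x in (0:ℝ)..1, (ut t x)^2) - b * (∫ x in (0:ℝ)..1, ut t x * θx t x)
        + ∫ x in (0:ℝ)..1, ut t x * f t x := by
    have h3 : IntervalIntegrable (fun x => c^2 * (ut t x * uxx t x) + σ * (ut t x * uxxt t x))
        volume 0 1 := (ii_B.const_mul _).add (ii_ut_uxxt.const_mul _)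
    have h2 := h3.sub (ii_A.const_mul μ)
    have h1 := h2.sub (ii_D.const_mul b)
    have hcongr : ∫ x in (0:ℝ)..1, ut t x * utt t x
        = ∫ x in (0:ℝ)..1, (c^2 * (ut t x * uxx t x) + σ * (ut t x * uxxt t x)
            - μ * (ut t x)^2 - b * (ut t x * θx t x) + ut t x * f t x) := by
      apply intervalIntegral.integral_congr_ae
      filter_upwards [hone] with x hne hx
      rw [uIoc_of_le zero_le_one] at hx
      have hxo : x ∈ Ioo (0:ℝ) 1 := ⟨hx.1, lt_of_le_of_ne hx.2 hne⟩
      rw [hpde1 t ht x hxo]; ring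
    rw [hcongr, intervalIntegral.integral_add h1 ii_ut_f,
      intervalIntegral.integral_sub h2 (ii_D.const_mul b),
      intervalIntegral.integral_sub h3 (ii_A.const_mul μ),
      intervalIntegral.integral_add (ii_B.const_mul (c^2)) (ii_ut_uxxt.const_mul σ),
      intervalIntegral.integral_const_mul, intervalIntegral.integral_const_mul,
      intervalIntegral.integral_const_mul, intervalIntegral.integral_const_mul]
  have hS2 : ∫ x in (0:ℝ)..1, θ t x * θt t x
      = k * (∫ x in (0:ℝ)..1, θ t x * θxx t x) - lam * (∫ x in (0:ℝ)..1, θ t x * uxt t x) := by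
    have hcongr : ∫ x in (0:ℝ)..1, θ t x * θt t x
        = ∫ x in (0:ℝ)..1, (k * (θ t x * θxx t x) - lam * (θ t x * uxt t x)) := by
      apply intervalIntegral.integral_congr_ae
      filter_upwards [hone] with x hne hx
      rw [uIoc_of_le zero_le_one] at hx
      have hxo : x ∈ Ioo (0:ℝ) 1 := ⟨hx.1, lt_of_le_of_ne hx.2 hne⟩
      rw [hpde2 t ht x hxo]; ring
    rw [hcongr, intervalIntegral.integral_sub (ii_θ_θxx.const_mul k) (ii_θuxt.const_mul lam),
      intervalIntegral.integral_const_mul, intervalIntegral.integral_const_mul]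

  -- time-derivative components
  have hD1 : HasDerivAt (fun s => ∫ x in (0:ℝ)..1, (ut s x)^2)
      (∫ x in (0:ℝ)..1, (utt t x * ut t x + ut t x * utt t x)) t := by
    apply param_deriv (fun s x => (ut s x)^2) (fun s x => utt s x * ut s x + ut s x * utt s x)
      t ht' (hut_c.pow 2) ((hutt_c.mul hut_c).add (hut_c.mul hutt_c))
    intro s hs x hx
    have h := (hutt_d s (mem_Ici.2 (le_of_lt hs)) x hx).hasDerivAt (Ici_mem_nhds hs)
    simpa only [← pow_two, Pi.pow_def] using h.mul h
  have hD2 : HasDerivAt (fun s => ∫ x in (0:ℝ)..1, (ux s x)^2)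
      (∫ x in (0:ℝ)..1, (uxt t x * ux t x + ux t x * uxt t x)) t := by
    apply param_deriv (fun s x => (ux s x)^2) (fun s x => uxt s x * ux s x + ux s x * uxt s x)
      t ht' (hux_c.pow 2) ((huxt_c.mul hux_c).add (hux_c.mul huxt_c))
    intro s hs x hx
    have h := ((huxt_d s (mem_Ici.2 (le_of_lt hs)) x hx).2).hasDerivAt (Ici_mem_nhds hs)
    simpa only [← pow_two, Pi.pow_def] using h.mul h
  have hD3 : HasDerivAt (fun s => (ut s 1)^2) (utt t 1 * ut t 1 + ut t 1 * utt t 1) t := by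
    have h := (hutt_d t ht'.le 1 hmem1).hasDerivAt (Ici_mem_nhds ht')
    simpa only [← pow_two, Pi.pow_def] using h.mul h
  have haeD : (fun x => θt t x) =ᵐ[volume.restrict (Ioo (0:ℝ) 1)] (DΘ t : ℝ → ℝ) :=
    ae_deriv_eq Θ DΘ θ θt t ht' (hΘd t ht) haeΘ (fun x hx => hθt_d t ht x hx)
  have hD4 : HasDerivAt (fun s => ∫ x in (0:ℝ)..1, (θ s x)^2)
      (2 * ∫ x in (0:ℝ)..1, θ t x * θt t x) t :=
    theta_deriv θ θt t ht' Θ DΘ hΘd haeΘ haeD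
  -- assemble the derivative
  have hE := (((hD1.const_mul (1/2:ℝ)).add (hD2.const_mul (c^2/2))).add
    (hD4.const_mul (b/(2*lam)))).add (hD3.const_mul (a*σ/2))

  -- clean up the IBP identities
  rw [intervalIntegral.integral_add (contII (cuxt.mul cux) : IntervalIntegrable (fun x => uxt t x * ux t x) volume 0 1) ii_B, ut0, hbc1 t ht] at hI1
  rw [intervalIntegral.integral_add (contII (cuxt.mul cuxt) : IntervalIntegrable (fun x => uxt t x * uxt t x) volume 0 1) ii_ut_uxxt, ut0, uxt1] at hI2
  rw [intervalIntegral.integral_add (contII (cθx.mul cθx) : IntervalIntegrable (fun x => θx t x * θx t x) volume 0 1) ii_θ_θxx, θ0, θ1] at hI3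
  rw [intervalIntegral.integral_add (contII (cθx.mul cut) : IntervalIntegrable (fun x => θx t x * ut t x) volume 0 1) ii_θuxt, θ0, θ1] at hI4
  -- commutation / doubling identities
  have c1 : (∫ x in (0:ℝ)..1, uxt t x * ux t x) = ∫ x in (0:ℝ)..1, ux t x * uxt t x :=
    intcongr fun x => mul_comm _ _
  have c2 : (∫ x in (0:ℝ)..1, uxt t x * uxt t x) = ∫ x in (0:ℝ)..1, (uxt t x)^2 :=
    intcongr fun x => (pow_two _).symm
  have c3 : (∫ x in (0:ℝ)..1, θx t x * θx t x) = ∫ x in (0:ℝ)..1, (θx t x)^2 :=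
    intcongr fun x => (pow_two _).symm
  have c4 : (∫ x in (0:ℝ)..1, θx t x * ut t x) = ∫ x in (0:ℝ)..1, ut t x * θx t x :=
    intcongr fun x => mul_comm _ _
  have e1 : (∫ x in (0:ℝ)..1, (utt t x * ut t x + ut t x * utt t x))
      = 2 * ∫ x in (0:ℝ)..1, ut t x * utt t x := by
    rw [← intervalIntegral.integral_const_mul]
    exact intcongr fun x => by ring
  have e2 : (∫ x in (0:ℝ)..1, (uxt t x * ux t x + ux t x * uxt t x))
      = 2 * ∫ x in (0:ℝ)..1, ux t x * uxt t x := by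
    rw [← intervalIntegral.integral_const_mul]
    exact intcongr fun x => by ring
  have hlam' : lam ≠ 0 := ne_of_gt hlam
  have hS2' : b/(2*lam) * (2 * ∫ x in (0:ℝ)..1, θ t x * θt t x)
      = k*b/lam * (∫ x in (0:ℝ)..1, θ t x * θxx t x) - b * (∫ x in (0:ℝ)..1, θ t x * uxt t x) := by
    rw [hS2]; field_simp
  have hVeq : (1/2 * (∫ x in (0:ℝ)..1, (utt t x * ut t x + ut t x * utt t x))
      + c^2/2 * (∫ x in (0:ℝ)..1, (uxt t x * ux t x + ux t x * uxt t x))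
      + b/(2*lam) * (2 * ∫ x in (0:ℝ)..1, θ t x * θt t x))
      + a*σ/2 * (utt t 1 * ut t 1 + ut t 1 * utt t 1)
      = -μ * (∫ x in (0:ℝ)..1, (ut t x)^2) + (∫ x in (0:ℝ)..1, ut t x * f t x) -
          σ * (∫ x in (0:ℝ)..1, (uxt t x)^2) - a * c^2 * (ut t 1)^2 -
          (k*b/lam) * (∫ x in (0:ℝ)..1, (θx t x)^2) := by
    linear_combination (1/2)*e1 + hS1 + (c^2/2)*e2 + hS2' + c^2*hI1 - c^2*c1 + σ*hI2 - σ*c2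
      + (k*b/lam)*hI3 - (k*b/lam)*c3 - b*hI4 + b*c4
  exact hVeq ▸ hE
end

section
/- Let a, c > 0, μ ≥ 0, σ, b, k, λ > 0 and r > 0, set B := aσ·(exp(r)(1−ac) + exp(−r)(1+ac)), let R > 0, and let M > 0 satisfy M > R − 2exp(−r) and M > −B/(aσ). Define V(u,w,θ) := Φ(u,w) + R·W(u,w) + M·E(u,w,θ), C₁ := min( (M−R)/2 + exp(−r), c²·(M/2 + exp(−r)), bM/(2λ), (aσM + B)/2, Rσ²/4 ) and C₂ := max( M/2 + exp(r) + R, c²·(M/2 + exp(r)), bM/(2λ), (aσM + B)/2, Rσ² ). Then 0 < C₁ ≤ C₂ and for all u ∈ H²(0,1), w ∈ C⁰([0,1]) ∩ H¹(0,1), θ ∈ L²(0,1): C₁·(‖w‖₂² + ‖u_x‖₂² + ‖θ‖₂² + w²(1) + ‖u_xx‖₂²) ≤ V(u,w,θ) ≤ C₂·(‖w‖₂² + ‖u_x‖₂² + ‖θ‖₂² + w²(1) + ‖u_xx‖₂²). -/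
open MeasureTheory Set

set_option maxHeartbeats 4000000

private lemma aux_int (f : ℝ → ℝ) : (∫ x in (0:ℝ)..1, f x) = ∫ x in Set.Ioo (0:ℝ) 1, f x := by
  rw [intervalIntegral.integral_of_le zero_le_one]
  exact MeasureTheory.integral_Ioc_eq_integral_Ioo


private lemma pt_low (er A A' W U C : ℝ) (hA : er ≤ A) (hA' : er ≤ A') :
    0 ≤ A * (W + C*U)^2 + A' * (W - C*U)^2 - er * (2*W^2 + 2*C^2*U^2) := by
  nlinarith [mul_nonneg (sub_nonneg.mpr hA) (sq_nonneg (W + C*U)),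
    mul_nonneg (sub_nonneg.mpr hA') (sq_nonneg (W - C*U))]

private lemma pt_up (er A A' W U C : ℝ) (hA : A ≤ er) (hA' : A' ≤ er) :
    0 ≤ er * (2*W^2 + 2*C^2*U^2) - (A * (W + C*U)^2 + A' * (W - C*U)^2) := by
  nlinarith [mul_nonneg (sub_nonneg.mpr hA) (sq_nonneg (W + C*U)),
    mul_nonneg (sub_nonneg.mpr hA') (sq_nonneg (W - C*U))]

private lemma ptW_low (W S U : ℝ) : 0 ≤ (W - S*U)^2 + W^2 - S^2/2*U^2 := by
  nlinarith [sq_nonneg (W - S/2*U)]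

private lemma ptW_up (W S U : ℝ) : 0 ≤ (2*W^2 + 2*S^2*U^2) - (W - S*U)^2 := by
  nlinarith [sq_nonneg (W + S*U)]

theorem stmt17 (a c μ σ b k lam r B R M C₁ C₂ : ℝ)
    (ha : 0 < a) (hc : 0 < c) (hμ : 0 ≤ μ) (hσ : 0 < σ) (hb : 0 < b) (hk : 0 < k)
    (hlam : 0 < lam) (hr : 0 < r)
    (hB : B = a*σ*(Real.exp r * (1 - a*c) + Real.exp (-r) * (1 + a*c)))
    (hR : 0 < R) (hM : 0 < M)
    (hM1 : M > R - 2*Real.exp (-r)) (hM2 : M > -B/(a*σ))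
    (hC₁ : C₁ = min ((M - R)/2 + Real.exp (-r)) (min (c^2*(M/2 + Real.exp (-r)))
      (min (b*M/(2*lam)) (min ((a*σ*M + B)/2) (R*σ^2/4)))))
    (hC₂ : C₂ = max (M/2 + Real.exp r + R) (max (c^2*(M/2 + Real.exp r))
      (max (b*M/(2*lam)) (max ((a*σ*M + B)/2) (R*σ^2))))) :
    0 < C₁ ∧ C₁ ≤ C₂ ∧
    ∀ (u ux uxx w wx θ : ℝ → ℝ)
      (hux_d : ∀ x ∈ Set.Icc (0:ℝ) 1, HasDerivWithinAt u (ux x) (Set.Icc 0 1) x)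
      (huxx_d : ∀ x ∈ Set.Icc (0:ℝ) 1, HasDerivWithinAt ux (uxx x) (Set.Icc 0 1) x)
      (hu_L2 : MeasureTheory.MemLp u 2 (MeasureTheory.volume.restrict (Set.Ioo (0:ℝ) 1)))
      (hux_L2 : MeasureTheory.MemLp ux 2 (MeasureTheory.volume.restrict (Set.Ioo (0:ℝ) 1)))
      (huxx_L2 : MeasureTheory.MemLp uxx 2 (MeasureTheory.volume.restrict (Set.Ioo (0:ℝ) 1)))
      (hw_c : ContinuousOn w (Set.Icc 0 1))
      (hwx_d : ∀ x ∈ Set.Icc (0:ℝ) 1, HasDerivWithinAt w (wx x) (Set.Icc 0 1) x)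
      (hwx_L2 : MeasureTheory.MemLp wx 2 (MeasureTheory.volume.restrict (Set.Ioo (0:ℝ) 1)))
      (hθ_L2 : MeasureTheory.MemLp θ 2 (MeasureTheory.volume.restrict (Set.Ioo (0:ℝ) 1))),
      C₁ * ((∫ x in (0:ℝ)..1, (w x)^2) + (∫ x in (0:ℝ)..1, (ux x)^2) + (∫ x in (0:ℝ)..1, (θ x)^2) + (w 1)^2 + (∫ x in (0:ℝ)..1, (uxx x)^2)) ≤
        ((1/2) * (∫ x in (0:ℝ)..1, Real.exp (r*x) * (w x + c * ux x)^2) +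
      (1/2) * (∫ x in (0:ℝ)..1, Real.exp (-(r*x)) * (w x - c * ux x)^2) + (B/2) * (w 1)^2 +
          R * ((1/2) * (∫ x in (0:ℝ)..1, (w x - σ * uxx x)^2)) + M * ((1/2) * (∫ x in (0:ℝ)..1, (w x)^2) + (c^2/2) * (∫ x in (0:ℝ)..1, (ux x)^2) + (b/(2*lam)) * (∫ x in (0:ℝ)..1, (θ x)^2) + (a*σ/2) * (w 1)^2)) ∧
        ((1/2) * (∫ x in (0:ℝ)..1, Real.exp (r*x) * (w x + c * ux x)^2) +
      (1/2) * (∫ x in (0:ℝ)..1, Real.exp (-(r*x)) * (w x - c * ux x)^2) + (B/2) * (w 1)^2 +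
          R * ((1/2) * (∫ x in (0:ℝ)..1, (w x - σ * uxx x)^2)) + M * ((1/2) * (∫ x in (0:ℝ)..1, (w x)^2) + (c^2/2) * (∫ x in (0:ℝ)..1, (ux x)^2) + (b/(2*lam)) * (∫ x in (0:ℝ)..1, (θ x)^2) + (a*σ/2) * (w 1)^2)) ≤
        C₂ * ((∫ x in (0:ℝ)..1, (w x)^2) + (∫ x in (0:ℝ)..1, (ux x)^2) + (∫ x in (0:ℝ)..1, (θ x)^2) + (w 1)^2 + (∫ x in (0:ℝ)..1, (uxx x)^2)) := by
  have haσ : 0 < a * σ := mul_pos ha hσ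
  have hBσ : -B < M * (a * σ) := by
    have := (div_lt_iff₀ haσ).mp hM2
    linarith
  have hexp_pos := Real.exp_pos (-r)
  have hexp_le : Real.exp (-r) ≤ Real.exp r := Real.exp_le_exp.mpr (by linarith)
  -- the five coefficient bounds
  have hc1 : C₁ ≤ (M - R)/2 + Real.exp (-r) := hC₁ ▸ min_le_left _ _
  have hc2 : C₁ ≤ c^2*(M/2 + Real.exp (-r)) := hC₁ ▸ (min_le_right _ _).trans (min_le_left _ _)
  have hc3 : C₁ ≤ b*M/(2*lam) := hC₁ ▸ (min_le_right _ _).trans ((min_le_right _ _).trans (min_le_left _ _))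
  have hc4 : C₁ ≤ (a*σ*M + B)/2 := hC₁ ▸ (min_le_right _ _).trans ((min_le_right _ _).trans ((min_le_right _ _).trans (min_le_left _ _)))
  have hc5 : C₁ ≤ R*σ^2/4 := hC₁ ▸ (min_le_right _ _).trans ((min_le_right _ _).trans ((min_le_right _ _).trans (min_le_right _ _)))
  have hd1 : M/2 + Real.exp r + R ≤ C₂ := hC₂ ▸ le_max_left _ _
  have hd2 : c^2*(M/2 + Real.exp r) ≤ C₂ := hC₂ ▸ (le_max_left _ _).trans (le_max_right _ _)
  have hd3 : b*M/(2*lam) ≤ C₂ := hC₂ ▸ ((le_max_left _ _).trans (le_max_right _ _)).trans (le_max_right _ _)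
  have hd4 : (a*σ*M + B)/2 ≤ C₂ := hC₂ ▸ (((le_max_left _ _).trans (le_max_right _ _)).trans (le_max_right _ _)).trans (le_max_right _ _)
  have hd5 : R*σ^2 ≤ C₂ := hC₂ ▸ (((le_max_right _ _).trans (le_max_right _ _)).trans (le_max_right _ _)).trans (le_max_right _ _)
  have hC₁pos : 0 < C₁ := by
    rw [hC₁]
    refine lt_min (by linarith) (lt_min ?_ (lt_min (by positivity) (lt_min ?_ (by positivity))))
    · have : 0 < M/2 + Real.exp (-r) := by linarith
      positivity
    · nlinarith
  refine ⟨hC₁pos, hc3.trans hd3, ?_⟩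
  intro u ux uxx w wx θ hux_d huxx_d hu_L2 hux_L2 huxx_L2 hw_c hwx_d hwx_L2 hθ_L2
  simp only [aux_int]
  have hIoo : (Set.Ioo (0:ℝ) 1) ⊆ Set.Icc (0:ℝ) 1 := Set.Ioo_subset_Icc_self
  have huxc : ContinuousOn ux (Set.Icc 0 1) := fun x hx => (huxx_d x hx).continuousWithinAt
  -- integrability facts
  have intOn : ∀ F : ℝ → ℝ, ContinuousOn F (Set.Icc 0 1) →
      IntegrableOn F (Set.Ioo (0:ℝ) 1) volume := fun F hF =>
    (hF.integrableOn_Icc).mono_set hIoo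
  have hexp_c : Continuous fun x : ℝ => Real.exp (r*x) :=
    Real.continuous_exp.comp (continuous_const.mul continuous_id)
  have hexp_c' : Continuous fun x : ℝ => Real.exp (-(r*x)) :=
    Real.continuous_exp.comp ((continuous_const.mul continuous_id).neg)
  have iw2 : IntegrableOn (fun x => (w x)^2) (Set.Ioo (0:ℝ) 1) volume :=
    intOn _ (hw_c.pow 2)
  have iux2 : IntegrableOn (fun x => (ux x)^2) (Set.Ioo (0:ℝ) 1) volume :=
    intOn _ (huxc.pow 2)
  have iJp : IntegrableOn (fun x => Real.exp (r*x) * (w x + c * ux x)^2) (Set.Ioo (0:ℝ) 1) volume :=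
    intOn _ (hexp_c.continuousOn.mul ((hw_c.add (continuousOn_const.mul huxc)).pow 2))
  have iJm : IntegrableOn (fun x => Real.exp (-(r*x)) * (w x - c * ux x)^2) (Set.Ioo (0:ℝ) 1) volume :=
    intOn _ (hexp_c'.continuousOn.mul ((hw_c.sub (continuousOn_const.mul huxc)).pow 2))
  have iθ2 : Integrable (fun x => (θ x)^2) (volume.restrict (Set.Ioo (0:ℝ) 1)) :=
    hθ_L2.integrable_sq
  have ixx2 : Integrable (fun x => (uxx x)^2) (volume.restrict (Set.Ioo (0:ℝ) 1)) :=
    huxx_L2.integrable_sq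
  have hw_aesm : AEStronglyMeasurable w (volume.restrict (Set.Ioo (0:ℝ) 1)) :=
    (hw_c.mono hIoo).aestronglyMeasurable measurableSet_Ioo
  have hwL2 : MemLp w 2 (volume.restrict (Set.Ioo (0:ℝ) 1)) :=
    (memLp_two_iff_integrable_sq hw_aesm).mpr iw2
  have iKw : Integrable (fun x => (w x - σ * uxx x)^2) (volume.restrict (Set.Ioo (0:ℝ) 1)) := by
    have := (hwL2.sub (huxx_L2.const_mul σ)).integrable_sq
    simpa using this
  -- nonnegativity of the basic integrals
  have hIw0 : 0 ≤ ∫ x in Set.Ioo (0:ℝ) 1, (w x)^2 :=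
    setIntegral_nonneg measurableSet_Ioo fun x _ => sq_nonneg _
  have hIux0 : 0 ≤ ∫ x in Set.Ioo (0:ℝ) 1, (ux x)^2 :=
    setIntegral_nonneg measurableSet_Ioo fun x _ => sq_nonneg _
  have hIθ0 : 0 ≤ ∫ x in Set.Ioo (0:ℝ) 1, (θ x)^2 :=
    setIntegral_nonneg measurableSet_Ioo fun x _ => sq_nonneg _
  have hIxx0 : 0 ≤ ∫ x in Set.Ioo (0:ℝ) 1, (uxx x)^2 :=
    setIntegral_nonneg measurableSet_Ioo fun x _ => sq_nonneg _
  have hw10 : (0:ℝ) ≤ (w 1)^2 := sq_nonneg _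
  -- L1 : lower bound on exponentially weighted integrals
  have hrest : Integrable (fun x => Real.exp (-r) * (2*(w x)^2 + 2*c^2*(ux x)^2))
      (volume.restrict (Set.Ioo (0:ℝ) 1)) :=
    ((iw2.const_mul 2).add (iux2.const_mul (2*c^2))).const_mul (Real.exp (-r))
  have iJpm : Integrable (fun x => Real.exp (r*x) * (w x + c * ux x)^2
      + Real.exp (-(r*x)) * (w x - c * ux x)^2) (volume.restrict (Set.Ioo (0:ℝ) 1)) :=
    iJp.add iJm
  have iww : Integrable (fun x => 2*(w x)^2 + 2*c^2*(ux x)^2)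
      (volume.restrict (Set.Ioo (0:ℝ) 1)) := (iw2.const_mul 2).add (iux2.const_mul (2*c^2))
  have iKww : Integrable (fun x => (w x - σ * uxx x)^2 + (w x)^2)
      (volume.restrict (Set.Ioo (0:ℝ) 1)) := iKw.add iw2
  have iwxx : Integrable (fun x => 2*(w x)^2 + 2*σ^2*(uxx x)^2)
      (volume.restrict (Set.Ioo (0:ℝ) 1)) := (iw2.const_mul 2).add (ixx2.const_mul (2*σ^2))
  have key1 : (0:ℝ) ≤ ∫ x in Set.Ioo (0:ℝ) 1,
      (Real.exp (r*x) * (w x + c * ux x)^2 + Real.exp (-(r*x)) * (w x - c * ux x)^2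
        - Real.exp (-r) * (2*(w x)^2 + 2*c^2*(ux x)^2)) := by
    refine setIntegral_nonneg measurableSet_Ioo fun x hx => ?_
    exact pt_low _ _ _ _ _ _
      (Real.exp_le_exp.mpr (by nlinarith only [hx.1, hr, hx.2]))
      (Real.exp_le_exp.mpr (by nlinarith only [hx.1, hr, hx.2]))
  have e1 : (∫ x in Set.Ioo (0:ℝ) 1,
      (Real.exp (r*x) * (w x + c * ux x)^2 + Real.exp (-(r*x)) * (w x - c * ux x)^2
        - Real.exp (-r) * (2*(w x)^2 + 2*c^2*(ux x)^2)))
      = (∫ x in Set.Ioo (0:ℝ) 1, Real.exp (r*x) * (w x + c * ux x)^2)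
        + (∫ x in Set.Ioo (0:ℝ) 1, Real.exp (-(r*x)) * (w x - c * ux x)^2)
        - Real.exp (-r) * (2*(∫ x in Set.Ioo (0:ℝ) 1, (w x)^2)
            + 2*c^2*(∫ x in Set.Ioo (0:ℝ) 1, (ux x)^2)) := by
    rw [integral_sub iJpm hrest, integral_add iJp iJm, integral_const_mul,
      integral_add (iw2.const_mul 2) (iux2.const_mul (2*c^2)), integral_const_mul,
      integral_const_mul]
  have L1 : Real.exp (-r) * (2*(∫ x in Set.Ioo (0:ℝ) 1, (w x)^2)
        + 2*c^2*(∫ x in Set.Ioo (0:ℝ) 1, (ux x)^2))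
      ≤ (∫ x in Set.Ioo (0:ℝ) 1, Real.exp (r*x) * (w x + c * ux x)^2)
        + (∫ x in Set.Ioo (0:ℝ) 1, Real.exp (-(r*x)) * (w x - c * ux x)^2) := by
    rw [e1] at key1; linarith only [key1]
  -- U1 : upper bound on exponentially weighted integrals
  have hrest' : Integrable (fun x => Real.exp r * (2*(w x)^2 + 2*c^2*(ux x)^2))
      (volume.restrict (Set.Ioo (0:ℝ) 1)) :=
    ((iw2.const_mul 2).add (iux2.const_mul (2*c^2))).const_mul (Real.exp r)
  have key2 : (0:ℝ) ≤ ∫ x in Set.Ioo (0:ℝ) 1,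
      (Real.exp r * (2*(w x)^2 + 2*c^2*(ux x)^2)
        - (Real.exp (r*x) * (w x + c * ux x)^2 + Real.exp (-(r*x)) * (w x - c * ux x)^2)) := by
    refine setIntegral_nonneg measurableSet_Ioo fun x hx => ?_
    exact pt_up _ _ _ _ _ _
      (Real.exp_le_exp.mpr (by nlinarith only [hx.1, hr, hx.2]))
      (Real.exp_le_exp.mpr (by nlinarith only [hx.1, hr, hx.2]))
  have e2 : (∫ x in Set.Ioo (0:ℝ) 1,
      (Real.exp r * (2*(w x)^2 + 2*c^2*(ux x)^2)
        - (Real.exp (r*x) * (w x + c * ux x)^2 + Real.exp (-(r*x)) * (w x - c * ux x)^2)))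
      = Real.exp r * (2*(∫ x in Set.Ioo (0:ℝ) 1, (w x)^2)
            + 2*c^2*(∫ x in Set.Ioo (0:ℝ) 1, (ux x)^2))
        - ((∫ x in Set.Ioo (0:ℝ) 1, Real.exp (r*x) * (w x + c * ux x)^2)
          + (∫ x in Set.Ioo (0:ℝ) 1, Real.exp (-(r*x)) * (w x - c * ux x)^2)) := by
    rw [integral_sub hrest' iJpm, integral_add iJp iJm, integral_const_mul,
      integral_add (iw2.const_mul 2) (iux2.const_mul (2*c^2)), integral_const_mul,
      integral_const_mul]
  have U1 : (∫ x in Set.Ioo (0:ℝ) 1, Real.exp (r*x) * (w x + c * ux x)^2)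
        + (∫ x in Set.Ioo (0:ℝ) 1, Real.exp (-(r*x)) * (w x - c * ux x)^2)
      ≤ Real.exp r * (2*(∫ x in Set.Ioo (0:ℝ) 1, (w x)^2)
        + 2*c^2*(∫ x in Set.Ioo (0:ℝ) 1, (ux x)^2)) := by
    rw [e2] at key2; linarith only [key2]
  -- L2 : lower bound on the W-term
  have key3 : (0:ℝ) ≤ ∫ x in Set.Ioo (0:ℝ) 1,
      ((w x - σ * uxx x)^2 + (w x)^2 - σ^2/2 * (uxx x)^2) := by
    exact setIntegral_nonneg measurableSet_Ioo fun x _ => ptW_low _ _ _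
  have e3 : (∫ x in Set.Ioo (0:ℝ) 1, ((w x - σ * uxx x)^2 + (w x)^2 - σ^2/2 * (uxx x)^2))
      = (∫ x in Set.Ioo (0:ℝ) 1, (w x - σ * uxx x)^2) + (∫ x in Set.Ioo (0:ℝ) 1, (w x)^2)
        - σ^2/2 * (∫ x in Set.Ioo (0:ℝ) 1, (uxx x)^2) := by
    rw [integral_sub iKww (ixx2.const_mul (σ^2/2)), integral_add iKw iw2,
      integral_const_mul]
  have L2 : σ^2/2 * (∫ x in Set.Ioo (0:ℝ) 1, (uxx x)^2) - (∫ x in Set.Ioo (0:ℝ) 1, (w x)^2)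
      ≤ (∫ x in Set.Ioo (0:ℝ) 1, (w x - σ * uxx x)^2) := by
    rw [e3] at key3; linarith only [key3]
  -- U2 : upper bound on the W-term
  have key4 : (0:ℝ) ≤ ∫ x in Set.Ioo (0:ℝ) 1,
      ((2*(w x)^2 + 2*σ^2*(uxx x)^2) - (w x - σ * uxx x)^2) := by
    exact setIntegral_nonneg measurableSet_Ioo fun x _ => ptW_up _ _ _
  have e4 : (∫ x in Set.Ioo (0:ℝ) 1, ((2*(w x)^2 + 2*σ^2*(uxx x)^2) - (w x - σ * uxx x)^2))
      = (2*(∫ x in Set.Ioo (0:ℝ) 1, (w x)^2) + 2*σ^2*(∫ x in Set.Ioo (0:ℝ) 1, (uxx x)^2))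
        - (∫ x in Set.Ioo (0:ℝ) 1, (w x - σ * uxx x)^2) := by
    rw [integral_sub iwxx iKw,
      integral_add (iw2.const_mul 2) (ixx2.const_mul (2*σ^2)), integral_const_mul,
      integral_const_mul]
  have U2 : (∫ x in Set.Ioo (0:ℝ) 1, (w x - σ * uxx x)^2)
      ≤ 2*(∫ x in Set.Ioo (0:ℝ) 1, (w x)^2) + 2*σ^2*(∫ x in Set.Ioo (0:ℝ) 1, (uxx x)^2) := by
    rw [e4] at key4; linarith only [key4]
  set Iw := ∫ x in Set.Ioo (0:ℝ) 1, (w x)^2 with hIw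
  set Iux := ∫ x in Set.Ioo (0:ℝ) 1, (ux x)^2 with hIux
  set Iθ := ∫ x in Set.Ioo (0:ℝ) 1, (θ x)^2 with hIθ
  set Ixx := ∫ x in Set.Ioo (0:ℝ) 1, (uxx x)^2 with hIxx
  set Jp := ∫ x in Set.Ioo (0:ℝ) 1, Real.exp (r*x) * (w x + c * ux x)^2 with hJp
  set Jm := ∫ x in Set.Ioo (0:ℝ) 1, Real.exp (-(r*x)) * (w x - c * ux x)^2 with hJm
  set Kw := ∫ x in Set.Ioo (0:ℝ) 1, (w x - σ * uxx x)^2 with hKw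
  have hth1 : C₁ * Iθ ≤ M * (b / (2 * lam) * Iθ) := by
    calc C₁ * Iθ ≤ b*M/(2*lam) * Iθ := mul_le_mul_of_nonneg_right hc3 hIθ0
      _ = M * (b / (2 * lam) * Iθ) := by ring
  have hth2 : M * (b / (2 * lam) * Iθ) ≤ C₂ * Iθ := by
    calc M * (b / (2 * lam) * Iθ) = b*M/(2*lam) * Iθ := by ring
      _ ≤ C₂ * Iθ := mul_le_mul_of_nonneg_right hd3 hIθ0
  constructor
  · linarith only [L1, hth1, mul_le_mul_of_nonneg_right hc1 hIw0,
      mul_le_mul_of_nonneg_right hc2 hIux0,       mul_le_mul_of_nonneg_right hc4 hw10, mul_le_mul_of_nonneg_right hc5 hIxx0,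
      mul_le_mul_of_nonneg_left L2 hR.le]
  · linarith only [U1, hth2, mul_le_mul_of_nonneg_right hd1 hIw0,
      mul_le_mul_of_nonneg_right hd2 hIux0,       mul_le_mul_of_nonneg_right hd4 hw10, mul_le_mul_of_nonneg_right hd5 hIxx0,
      mul_le_mul_of_nonneg_left U2 hR.le]
end
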